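/- Let α > 0 and β > −1/2 with 2β+1 > 0, aᵢ = i^{−α}, σᵢ² = i^{2β}. Let t(n) solve Σᵢ i^{2β+α}(1 − t i^α)₊ = n t (the Pinsker equation for the uniform allocation n̄_u(n)). Then the uniform-allocation risk R(n) = n^{−1} Σᵢ i^{2β}(1 − t(n) i^α)₊ satisfies R(n) ∼ B̄_E n^{−2α/(2α+2β+1)} as n → ∞, where B̄_E = ((2α+2β+1)^{(2β+1)/(2α+2β+1)}/(2β+1)) · (α/(α+2β+1))^{2α/(2α+2β+1)}. -/

import Mathlib

open Filter
open Finset Real Topology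

open Filter Finset Real Topology

-- Bernoulli consequences: for q > 0, x ≥ 1 real:
-- between_bounds: q * x^(q-1) is between x^q - (x-1)^q and (x+1)^q - x^q (order depends on q≤1 or 1≤q)
lemma bern_up {q x : ℝ} (hq : 1 ≤ q) (hx : 1 ≤ x) :
    q * x ^ (q - 1) ≤ (x + 1) ^ q - x ^ q := by
  have hx0 : 0 < x := by linarith
  have h := one_add_mul_self_le_rpow_one_add (s := 1/x) (le_trans (by norm_num) (by positivity : (0:ℝ) ≤ 1/x)) hq
  have hxq : (0:ℝ) < x ^ q := rpow_pos_of_pos hx0 q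
  have e1 : (1 + 1/x) ^ q * x ^ q = (x+1) ^ q := by
    rw [← mul_rpow (by positivity) hx0.le]
    rw [add_mul, one_mul, div_mul_cancel₀ _ hx0.ne', add_comm]
  have e2 : x ^ (q - 1) = x ^ q / x := by
    rw [rpow_sub hx0, rpow_one]
  rw [e2]
  have := mul_le_mul_of_nonneg_right h hxq.le
  rw [e1] at this
  have : x ^ q + q * (x ^ q / x) ≤ (x+1)^q := by
    calc x ^ q + q * (x ^ q / x) = (1 + q * (1/x)) * x ^ q := by field_simp
    _ ≤ (x+1)^q := this
  linarith

lemma bern_down {q x : ℝ} (hq : 1 ≤ q) (hx : 1 ≤ x) :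
    x ^ q - (x - 1) ^ q ≤ q * x ^ (q - 1) := by
  have hx0 : 0 < x := by linarith
  have h := one_add_mul_self_le_rpow_one_add (s := -(1/x))
    (by rw [neg_le_neg_iff]; exact (div_le_one hx0).2 hx) hq
  have hxq : (0:ℝ) < x ^ q := rpow_pos_of_pos hx0 q
  have hnn : (0:ℝ) ≤ 1 + -(1/x) := by
    have h1 : 1/x ≤ 1 := (div_le_one hx0).2 hx
    linarith
  have e1 : (1 + -(1/x)) ^ q * x ^ q = (x - 1) ^ q := by
    rw [← mul_rpow hnn hx0.le]
    congr 1
    field_simp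
    ring
  have e2 : x ^ (q - 1) = x ^ q / x := by rw [rpow_sub hx0, rpow_one]
  rw [e2]
  have := mul_le_mul_of_nonneg_right h hxq.le
  rw [e1] at this
  have : x ^ q - q * (x ^ q / x) ≤ (x-1)^q := by
    calc x ^ q - q * (x ^ q / x) = (1 + q * -(1/x)) * x ^ q := by field_simp; ring
    _ ≤ (x-1)^q := this
  linarith

lemma bern_up' {q x : ℝ} (hq0 : 0 ≤ q) (hq : q ≤ 1) (hx : 1 ≤ x) :
    (x + 1) ^ q - x ^ q ≤ q * x ^ (q - 1) := by
  have hx0 : 0 < x := by linarith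
  have h := rpow_one_add_le_one_add_mul_self (s := 1/x)
    (le_trans (by norm_num) (by positivity : (0:ℝ) ≤ 1/x)) hq0 hq
  have hxq : (0:ℝ) < x ^ q := rpow_pos_of_pos hx0 q
  have e1 : (1 + 1/x) ^ q * x ^ q = (x+1) ^ q := by
    rw [← mul_rpow (by positivity) hx0.le]
    rw [add_mul, one_mul, div_mul_cancel₀ _ hx0.ne', add_comm]
  have e2 : x ^ (q - 1) = x ^ q / x := by rw [rpow_sub hx0, rpow_one]
  rw [e2]
  have := mul_le_mul_of_nonneg_right h hxq.le
  rw [e1] at this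
  have : (x+1)^q ≤ x ^ q + q * (x ^ q / x) := by
    calc (x+1)^q ≤ (1 + q * (1/x)) * x ^ q := this
    _ = x ^ q + q * (x ^ q / x) := by field_simp
  linarith

lemma bern_down' {q x : ℝ} (hq0 : 0 ≤ q) (hq : q ≤ 1) (hx : 1 ≤ x) :
    q * x ^ (q - 1) ≤ x ^ q - (x - 1) ^ q := by
  have hx0 : 0 < x := by linarith
  have h := rpow_one_add_le_one_add_mul_self (s := -(1/x))
    (by rw [neg_le_neg_iff]; exact (div_le_one hx0).2 hx) hq0 hq
  have hxq : (0:ℝ) < x ^ q := rpow_pos_of_pos hx0 q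
  have hnn : (0:ℝ) ≤ 1 + -(1/x) := by
    have h1 : 1/x ≤ 1 := (div_le_one hx0).2 hx
    linarith
  have e1 : (1 + -(1/x)) ^ q * x ^ q = (x - 1) ^ q := by
    rw [← mul_rpow hnn hx0.le]
    congr 1
    field_simp
    ring
  have e2 : x ^ (q - 1) = x ^ q / x := by rw [rpow_sub hx0, rpow_one]
  rw [e2]
  have := mul_le_mul_of_nonneg_right h hxq.le
  rw [e1] at this
  have : (x-1)^q ≤ x ^ q - q * (x ^ q / x) := by
    calc (x-1)^q ≤ (1 + q * -(1/x)) * x ^ q := this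
    _ = x ^ q - q * (x ^ q / x) := by field_simp; ring
  linarith

lemma sum_rpow_between (p : ℝ) (hp : -1 < p) (M : ℕ) :
    min ((M:ℝ) ^ (p+1)) (((M:ℝ)+1) ^ (p+1) - 1) ≤ (p+1) * ∑ i ∈ range M, ((i:ℝ)+1)^p ∧
      (p+1) * ∑ i ∈ range M, ((i:ℝ)+1)^p ≤ max ((M:ℝ) ^ (p+1)) (((M:ℝ)+1) ^ (p+1) - 1) := by
  set q := p + 1 with hq
  have hq0 : 0 < q := by linarith
  have hf0 : ((0:ℕ):ℝ) ^ q = 0 := by simpa using zero_rpow hq0.ne'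
  have tel1 : ∑ i ∈ range M, (((i:ℝ)+1) ^ q - (i:ℝ) ^ q) = (M:ℝ) ^ q := by
    have h := Finset.sum_range_sub (fun i : ℕ => ((i:ℝ)) ^ q) M
    push_cast at h
    rw [zero_rpow hq0.ne', sub_zero] at h
    exact h
  have tel2 : ∑ i ∈ range M, ((((i:ℝ)+1)+1) ^ q - ((i:ℝ)+1) ^ q) = ((M:ℝ)+1) ^ q - 1 := by
    have h := Finset.sum_range_sub (fun i : ℕ => ((i:ℝ)+1) ^ q) M
    push_cast at h
    rw [zero_add, one_rpow] at h
    exact h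
  have hdist : (p+1) * ∑ i ∈ range M, ((i:ℝ)+1)^p = ∑ i ∈ range M, q * ((i:ℝ)+1) ^ (q-1) := by
    rw [Finset.mul_sum]
    congr 1; ext i; rw [hq]; ring_nf
  rcases le_total q 1 with hq1 | hq1
  · -- q ≤ 1 : (M+1)^q - 1 ≤ qS ≤ M^q
    have h1 : ∑ i ∈ range M, ((((i:ℝ)+1)+1) ^ q - ((i:ℝ)+1) ^ q) ≤
        ∑ i ∈ range M, q * ((i:ℝ)+1) ^ (q-1) := by
      apply Finset.sum_le_sum
      intro i _
      exact bern_up' hq0.le hq1 (by push_cast; linarith [Nat.cast_nonneg (α := ℝ) i])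
    have h2 : ∑ i ∈ range M, q * ((i:ℝ)+1) ^ (q-1) ≤
        ∑ i ∈ range M, (((i:ℝ)+1) ^ q - (i:ℝ) ^ q) := by
      apply Finset.sum_le_sum
      intro i _
      have := bern_down' (x := (i:ℝ)+1) hq0.le hq1 (by linarith [Nat.cast_nonneg (α := ℝ) i])
      simpa using this
    rw [tel1] at h2; rw [tel2] at h1
    constructor
    · exact le_trans (min_le_right _ _) (by rw [hdist]; exact h1)
    · exact le_trans (by rw [hdist]; exact h2) (le_max_left _ _)
  · -- 1 ≤ q : M^q ≤ qS ≤ (M+1)^q - 1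
    have h1 : ∑ i ∈ range M, q * ((i:ℝ)+1) ^ (q-1) ≤
        ∑ i ∈ range M, ((((i:ℝ)+1)+1) ^ q - ((i:ℝ)+1) ^ q) := by
      apply Finset.sum_le_sum
      intro i _
      exact bern_up hq1 (by linarith [Nat.cast_nonneg (α := ℝ) i])
    have h2 : ∑ i ∈ range M, (((i:ℝ)+1) ^ q - (i:ℝ) ^ q) ≤
        ∑ i ∈ range M, q * ((i:ℝ)+1) ^ (q-1) := by
      apply Finset.sum_le_sum
      intro i _
      have := bern_down (x := (i:ℝ)+1) hq1 (by linarith [Nat.cast_nonneg (α := ℝ) i])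
      simpa using this
    rw [tel1] at h2; rw [tel2] at h1
    constructor
    · exact le_trans (min_le_left _ _) (by rw [hdist]; exact h2)
    · exact le_trans (by rw [hdist]; exact h1) (le_max_right _ _)

lemma tendsto_sum_rpow (p : ℝ) (hp : -1 < p) :
    Tendsto (fun M : ℕ => (∑ i ∈ range M, ((i:ℝ)+1)^p) / (M:ℝ)^(p+1)) atTop
      (𝓝 (1/(p+1))) := by
  set q := p + 1 with hq
  have hq0 : 0 < q := by linarith
  set A : ℕ → ℝ := fun M => (M:ℝ) ^ q / (q * (M:ℝ) ^ q) with hA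
  set B : ℕ → ℝ := fun M => (((M:ℝ)+1) ^ q - 1) / (q * (M:ℝ) ^ q) with hB
  have hAt : Tendsto A atTop (𝓝 (1/q)) := by
    apply Tendsto.congr' _ tendsto_const_nhds
    filter_upwards [eventually_ge_atTop 1] with M hM
    have hMq : (0:ℝ) < (M:ℝ) ^ q := rpow_pos_of_pos (by exact_mod_cast hM) q
    show 1/q = (M:ℝ) ^ q / (q * (M:ℝ) ^ q)
    rw [mul_comm q, ← div_div, div_self hMq.ne']
  have hMq_top : Tendsto (fun M : ℕ => (M:ℝ) ^ q) atTop atTop :=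
    (tendsto_rpow_atTop hq0).comp tendsto_natCast_atTop_atTop
  have hBt : Tendsto B atTop (𝓝 (1/q)) := by
    have h1 : Tendsto (fun M : ℕ => (((M:ℝ)+1)/(M:ℝ)) ^ q) atTop (𝓝 1) := by
      have : Tendsto (fun M : ℕ => ((M:ℝ)+1)/(M:ℝ)) atTop (𝓝 1) := by
        have := (tendsto_natCast_atTop_atTop (R := ℝ)).inv_tendsto_atTop
        have h2 : Tendsto (fun M : ℕ => 1 + ((M:ℝ))⁻¹) atTop (𝓝 (1 + 0)) :=
          tendsto_const_nhds.add this
        rw [add_zero] at h2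
        apply Tendsto.congr' _ h2
        filter_upwards [eventually_ge_atTop 1] with M hM
        have : (0:ℝ) < M := by exact_mod_cast hM
        field_simp
      have := this.rpow_const (p := q) (Or.inl one_ne_zero)
      simpa using this
    have h2 : Tendsto (fun M : ℕ => ((M:ℝ)^q)⁻¹) atTop (𝓝 0) :=
      hMq_top.inv_tendsto_atTop
    have h3 : Tendsto (fun M : ℕ => ((((M:ℝ)+1)/(M:ℝ)) ^ q - ((M:ℝ)^q)⁻¹) / q) atTop
        (𝓝 ((1 - 0)/q)) := (h1.sub h2).div_const q
    apply Tendsto.congr' _ (by simpa using h3)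
    filter_upwards [eventually_ge_atTop 1] with M hM
    have hM0 : (0:ℝ) < M := by exact_mod_cast hM
    have hMq : (0:ℝ) < (M:ℝ) ^ q := rpow_pos_of_pos hM0 q
    have hdiv : (((M:ℝ)+1)/(M:ℝ)) ^ q = ((M:ℝ)+1)^q / (M:ℝ)^q :=
      div_rpow (by linarith) hM0.le q
    rw [hB]
    simp only [hdiv]
    field_simp
    try exact Or.inl trivial
  apply tendsto_of_tendsto_of_tendsto_of_le_of_le'
    (by simpa [min_self] using hAt.min hBt) (by simpa [max_self] using hAt.max hBt)
  · filter_upwards [eventually_ge_atTop 1] with M hM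
    have hM0 : (0:ℝ) < M := by exact_mod_cast hM
    have hMq : (0:ℝ) < q * (M:ℝ) ^ q := by positivity
    have h := (sum_rpow_between p hp M).1
    have key := (div_le_div_iff_of_pos_right hMq).2 h
    rw [mul_div_mul_left _ _ hq0.ne'] at key
    calc min (A M) (B M) = min ((M:ℝ)^q) (((M:ℝ)+1)^q - 1) / (q * (M:ℝ)^q) := by
          rw [hA, hB]; exact min_div_div_right hMq.le _ _
      _ ≤ _ := key
  · filter_upwards [eventually_ge_atTop 1] with M hM
    have hM0 : (0:ℝ) < M := by exact_mod_cast hM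
    have hMq : (0:ℝ) < q * (M:ℝ) ^ q := by positivity
    have h := (sum_rpow_between p hp M).2
    have key := (div_le_div_iff_of_pos_right hMq).2 h
    rw [mul_div_mul_left _ _ hq0.ne'] at key
    calc (∑ i ∈ range M, ((i:ℝ)+1)^p) / (M:ℝ)^q ≤
          max ((M:ℝ)^q) (((M:ℝ)+1)^q - 1) / (q * (M:ℝ)^q) := key
      _ = max (A M) (B M) := by rw [hA, hB]; exact (max_div_div_right hMq.le _ _).symm

-- cutoff index
noncomputable def Mfl (α T : ℝ) : ℕ := ⌊T ^ (-1/α)⌋₊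

lemma rpow_inv_aux {α T : ℝ} (hα : 0 < α) (hT : 0 < T) :
    (T ^ (-1/α)) ^ α = T⁻¹ := by
  rw [← Real.rpow_mul hT.le, div_mul_cancel₀ _ hα.ne', rpow_neg_one]

lemma term_vanish {α T : ℝ} (hα : 0 < α) (hT : 0 < T) {i : ℕ}
    (hi : Mfl α T ≤ i) : max (1 - T * ((i:ℝ)+1) ^ α) 0 = 0 := by
  have h1 : T ^ (-1/α) < (i:ℝ) + 1 := by
    calc T ^ (-1/α) < (Mfl α T : ℝ) + 1 := Nat.lt_floor_add_one _
    _ ≤ (i:ℝ) + 1 := by exact_mod_cast Nat.add_le_add_right hi 1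
  have h2 : (T ^ (-1/α)) ^ α < ((i:ℝ)+1) ^ α :=
    rpow_lt_rpow (rpow_nonneg hT.le _) h1 hα
  rw [rpow_inv_aux hα hT] at h2
  have h4 : 1 < T * ((i:ℝ)+1) ^ α := by
    have := mul_lt_mul_of_pos_left h2 hT
    rwa [mul_inv_cancel₀ hT.ne'] at this
  exact max_eq_right (by linarith)

lemma summable_term {α T : ℝ} (γ : ℝ) (hα : 0 < α) (hT : 0 < T) :
    Summable (fun i : ℕ => ((i:ℝ)+1) ^ γ * max (1 - T * ((i:ℝ)+1) ^ α) 0) := by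
  apply summable_of_ne_finset_zero (s := range (Mfl α T))
  intro i hi
  rw [term_vanish hα hT (by simpa [Finset.mem_range, not_lt] using hi), mul_zero]

lemma tsum_term_eq {α T : ℝ} (γ : ℝ) (hα : 0 < α) (hT : 0 < T) :
    ∑' i : ℕ, ((i:ℝ)+1) ^ γ * max (1 - T * ((i:ℝ)+1) ^ α) 0
      = (∑ i ∈ range (Mfl α T), ((i:ℝ)+1) ^ γ)
        - T * ∑ i ∈ range (Mfl α T), ((i:ℝ)+1) ^ (γ + α) := by
  rw [tsum_eq_sum (s := range (Mfl α T)) (by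
    intro i hi
    rw [term_vanish hα hT (by simpa [Finset.mem_range, not_lt] using hi), mul_zero])]
  rw [Finset.mul_sum, ← Finset.sum_sub_distrib]
  apply Finset.sum_congr rfl
  intro i hi
  have hile : (i:ℝ) + 1 ≤ T ^ (-1/α) := by
    have h0 : (0:ℝ) ≤ T ^ (-1/α) := rpow_nonneg hT.le _
    have : (i:ℝ) + 1 ≤ (Mfl α T : ℝ) := by
      exact_mod_cast Nat.succ_le_of_lt (Finset.mem_range.1 hi)
    exact this.trans (Nat.floor_le h0)
  have hpos : (0:ℝ) < (i:ℝ) + 1 := by positivity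
  have h2 : ((i:ℝ)+1) ^ α ≤ (T ^ (-1/α)) ^ α :=
    rpow_le_rpow hpos.le hile hα.le
  rw [rpow_inv_aux hα hT] at h2
  have h3 : T * ((i:ℝ)+1) ^ α ≤ 1 := by
    have := mul_le_mul_of_nonneg_left h2 hT.le
    rwa [mul_inv_cancel₀ hT.ne'] at this
  rw [max_eq_left (by linarith)]
  rw [mul_sub, mul_one, rpow_add hpos, ← mul_assoc, mul_comm (((i:ℝ)+1)^γ) T, mul_assoc]

lemma Mfl_tendsto {α : ℝ} (hα : 0 < α) :
    Tendsto (fun T : ℝ => Mfl α T) (𝓝[>] (0:ℝ)) atTop := by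
  apply tendsto_nat_floor_atTop.comp
  have h1 : Tendsto (fun T : ℝ => (T⁻¹) ^ (1/α)) (𝓝[>] (0:ℝ)) atTop :=
    (tendsto_rpow_atTop (by positivity)).comp tendsto_inv_nhdsGT_zero
  apply h1.congr'
  filter_upwards [self_mem_nhdsWithin] with T (hT : 0 < T)
  rw [← rpow_neg_one T, ← Real.rpow_mul hT.le]
  congr 1
  ring

lemma hfun_tendsto {α : ℝ} (hα : 0 < α) :
    Tendsto (fun T : ℝ => T ^ (1/α) * (Mfl α T : ℝ)) (𝓝[>] (0:ℝ)) (𝓝 1) := by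
  have hpow0 : Tendsto (fun T : ℝ => T ^ (1/α)) (𝓝[>] (0:ℝ)) (𝓝 0) := by
    have hc : Tendsto (fun T : ℝ => T ^ (1/α)) (𝓝 (0:ℝ)) (𝓝 ((0:ℝ) ^ (1/α))) :=
      (Real.continuousAt_rpow_const 0 (1/α) (Or.inr (by positivity)))
    rw [zero_rpow (by positivity : (0:ℝ) < 1/α).ne'] at hc
    exact hc.mono_left nhdsWithin_le_nhds
  have hlow : Tendsto (fun T : ℝ => 1 - T ^ (1/α)) (𝓝[>] (0:ℝ)) (𝓝 1) := by
    simpa using tendsto_const_nhds.sub hpow0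
  apply tendsto_of_tendsto_of_tendsto_of_le_of_le' hlow tendsto_const_nhds
  · filter_upwards [self_mem_nhdsWithin] with T (hT : 0 < T)
    have hP : (0:ℝ) < T ^ (1/α) := rpow_pos_of_pos hT _
    have h1 : T ^ (-1/α) < (Mfl α T : ℝ) + 1 := Nat.lt_floor_add_one _
    have := mul_lt_mul_of_pos_left h1 hP
    rw [← rpow_add hT, mul_add, mul_one] at this
    have heq : 1/α + -1/α = 0 := by ring
    rw [heq, rpow_zero] at this
    linarith
  · filter_upwards [self_mem_nhdsWithin] with T (hT : 0 < T)
    have hP : (0:ℝ) < T ^ (1/α) := rpow_pos_of_pos hT _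
    have h1 : (Mfl α T : ℝ) ≤ T ^ (-1/α) := Nat.floor_le (rpow_nonneg hT.le _)
    have := mul_le_mul_of_nonneg_left h1 hP.le
    rw [← rpow_add hT] at this
    have heq : 1/α + -1/α = 0 := by ring
    rw [heq, rpow_zero] at this
    exact this

lemma tendsto_scaled_sum {α : ℝ} (hα : 0 < α) (γ : ℝ) (hγ : -1 < γ) :
    Tendsto (fun T : ℝ => T ^ ((γ+1)/α) *
        ∑' i : ℕ, ((i:ℝ)+1) ^ γ * max (1 - T * ((i:ℝ)+1) ^ α) 0)
      (𝓝[>] (0:ℝ)) (𝓝 (α / ((γ+1)*(γ+α+1)))) := by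
  have hγα : -1 < γ + α := by linarith
  have hMt := Mfl_tendsto hα
  have hh := hfun_tendsto hα
  have L1 : Tendsto (fun T : ℝ => (T ^ (1/α) * (Mfl α T : ℝ)) ^ (γ+1) *
      ((∑ i ∈ range (Mfl α T), ((i:ℝ)+1) ^ γ) / (Mfl α T : ℝ) ^ (γ+1)))
      (𝓝[>] (0:ℝ)) (𝓝 (1 * (1/(γ+1)))) := by
    simpa using ((hh.rpow_const (p := γ+1) (Or.inl one_ne_zero)).mul
      (((tendsto_sum_rpow γ hγ).comp hMt)))
  have L2 : Tendsto (fun T : ℝ => (T ^ (1/α) * (Mfl α T : ℝ)) ^ (γ+α+1) *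
      ((∑ i ∈ range (Mfl α T), ((i:ℝ)+1) ^ (γ+α)) / (Mfl α T : ℝ) ^ (γ+α+1)))
      (𝓝[>] (0:ℝ)) (𝓝 (1 * (1/(γ+α+1)))) := by
    have := ((hh.rpow_const (p := γ+α+1) (Or.inl one_ne_zero)).mul
      (((tendsto_sum_rpow (γ+α) hγα).comp hMt)))
    simpa using this
  have key := L1.sub L2
  have hne1 : γ + 1 ≠ 0 := by linarith
  have hne2 : γ + α + 1 ≠ 0 := by linarith
  have hval : 1 * (1/(γ+1)) - 1 * (1/(γ+α+1)) = α / ((γ+1)*(γ+α+1)) := by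
    field_simp
    ring
  rw [hval] at key
  apply key.congr'
  filter_upwards [self_mem_nhdsWithin, (Mfl_tendsto hα).eventually_ge_atTop 1]
    with T (hT : 0 < T) hM1
  have hMpos : (0:ℝ) < (Mfl α T : ℝ) := by exact_mod_cast hM1
  have hP : (0:ℝ) ≤ T ^ (1/α) := (rpow_pos_of_pos hT _).le
  have hexp : ∀ p : ℝ, (T ^ (1/α) * (Mfl α T : ℝ)) ^ p = T ^ (p/α) * (Mfl α T : ℝ) ^ p := by
    intro p
    rw [mul_rpow hP hMpos.le, ← Real.rpow_mul hT.le]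
    congr 2
    ring
  have hcancel : ∀ p : ℝ, (Mfl α T : ℝ) ^ p *
      ((∑ i ∈ range (Mfl α T), ((i:ℝ)+1) ^ (p - 1)) / (Mfl α T : ℝ) ^ p) =
      ∑ i ∈ range (Mfl α T), ((i:ℝ)+1) ^ (p - 1) := by
    intro p
    rw [mul_div_cancel₀ _ (rpow_pos_of_pos hMpos p).ne']
  rw [tsum_term_eq γ hα hT, mul_sub]
  have e1 : (T ^ (1/α) * (Mfl α T : ℝ)) ^ (γ+1) *
      ((∑ i ∈ range (Mfl α T), ((i:ℝ)+1) ^ γ) / (Mfl α T : ℝ) ^ (γ+1))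
      = T ^ ((γ+1)/α) * ∑ i ∈ range (Mfl α T), ((i:ℝ)+1) ^ γ := by
    rw [hexp, mul_assoc]
    congr 1
    have := hcancel (γ+1)
    simpa using this
  have e2 : (T ^ (1/α) * (Mfl α T : ℝ)) ^ (γ+α+1) *
      ((∑ i ∈ range (Mfl α T), ((i:ℝ)+1) ^ (γ+α)) / (Mfl α T : ℝ) ^ (γ+α+1))
      = T ^ ((γ+1)/α) * (T * ∑ i ∈ range (Mfl α T), ((i:ℝ)+1) ^ (γ+α)) := by
    rw [hexp, mul_assoc]
    have h2 : (Mfl α T : ℝ) ^ (γ+α+1) *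
        ((∑ i ∈ range (Mfl α T), ((i:ℝ)+1) ^ (γ+α)) / (Mfl α T : ℝ) ^ (γ+α+1))
        = ∑ i ∈ range (Mfl α T), ((i:ℝ)+1) ^ (γ+α) := by
      have := hcancel (γ+α+1)
      simpa using this
    rw [h2, ← mul_assoc]
    congr 1
    have hde : (γ+α+1)/α = (γ+1)/α + 1 := by field_simp; ring
    rw [hde, rpow_add hT, rpow_one]
  rw [e1, e2]

lemma tsum_anti {α γ : ℝ} (hα : 0 < α) {T₁ T₂ : ℝ} (h1 : 0 < T₁) (h12 : T₁ ≤ T₂) :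
    ∑' i : ℕ, ((i:ℝ)+1) ^ γ * max (1 - T₂ * ((i:ℝ)+1) ^ α) 0
      ≤ ∑' i : ℕ, ((i:ℝ)+1) ^ γ * max (1 - T₁ * ((i:ℝ)+1) ^ α) 0 := by
  apply Summable.tsum_le_tsum _ (summable_term γ hα (lt_of_lt_of_le h1 h12)) (summable_term γ hα h1)
  intro i
  apply mul_le_mul_of_nonneg_left _ (rpow_nonneg (by positivity) _)
  apply max_le_max _ le_rfl
  have : T₁ * ((i:ℝ)+1) ^ α ≤ T₂ * ((i:ℝ)+1) ^ α :=
    mul_le_mul_of_nonneg_right h12 (rpow_nonneg (by positivity) _)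
  linarith

lemma t_tendsto {α β : ℝ} (hα : 0 < α) (t : ℝ → ℝ)
    (ht : ∀ n : ℝ, 0 < n → 0 < t n ∧
      ∑' i : ℕ, ((i : ℝ) + 1) ^ (2*β + α) * max (1 - t n * ((i : ℝ) + 1) ^ α) 0
        = n * t n) :
    Tendsto t atTop (𝓝[>] (0:ℝ)) := by
  rw [tendsto_nhdsWithin_iff]
  constructor
  · rw [tendsto_order]
    constructor
    · intro a ha
      filter_upwards [eventually_gt_atTop 0] with n hn
      exact lt_trans ha (ht n hn).1
    · intro ε hε
      set C := ∑' i : ℕ, ((i:ℝ)+1) ^ (2*β + α) * max (1 - ε * ((i:ℝ)+1) ^ α) 0 with hC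
      filter_upwards [eventually_gt_atTop (max 0 (C/ε))] with n hn
      have hn0 : 0 < n := lt_of_le_of_lt (le_max_left _ _) hn
      obtain ⟨htn, hEq⟩ := ht n hn0
      by_contra hcon
      push_neg at hcon
      have hmono := tsum_anti (γ := 2*β + α) hα hε hcon
      rw [hEq] at hmono
      have h1 : C / ε < n := lt_of_le_of_lt (le_max_right _ _) hn
      have h2 : C < n * ε := (div_lt_iff₀ hε).1 h1
      have h3 : n * ε ≤ n * t n := mul_le_mul_of_nonneg_left hcon hn0.le
      linarith
  · filter_upwards [eventually_gt_atTop 0] with n hn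
    exact (ht n hn).1

lemma const_id {α β : ℝ} (hα : 0 < α) (hβ : -(1/2 : ℝ) < β) :
    α/((2*β+1)*(2*β+α+1)) *
      (α/((2*β+α+1)*(2*β+α+α+1))) ^ (-(2*β+1)/(2*α+2*β+1))
    = ((2*α+2*β+1) ^ ((2*β+1)/(2*α+2*β+1)) / (2*β+1)) *
        (α/(α+2*β+1)) ^ (2*α/(2*α+2*β+1)) := by
  have hs : (0:ℝ) < 2*β+1 := by linarith
  have hm : (0:ℝ) < α+2*β+1 := by linarith
  have hD : (0:ℝ) < 2*α+2*β+1 := by linarith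
  set e : ℝ := -(2*β+1)/(2*α+2*β+1) with he
  have hx : (0:ℝ) < α/(α+2*β+1) := by positivity
  have hC1 : α/((2*β+α+1)*(2*β+α+α+1)) = (α/(α+2*β+1)) * (2*α+2*β+1)⁻¹ := by
    rw [show (2*β+α+α+1 : ℝ) = 2*α+2*β+1 by ring, show (2*β+α+1 : ℝ) = α+2*β+1 by ring]
    field_simp
  rw [hC1, mul_rpow hx.le (by positivity), inv_rpow hD.le,
    ← rpow_neg hD.le, show -e = (2*β+1)/(2*α+2*β+1) by rw [he]; ring]
  have h2a : (2*α)/(2*α+2*β+1) = 1 + e := by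
    rw [he]; rw [div_eq_iff hD.ne', add_mul, div_mul_cancel₀ _ hD.ne']; ring
  rw [h2a, rpow_add hx, rpow_one]
  generalize (α/(α+2*β+1) : ℝ) ^ e = X
  generalize ((2*α+2*β+1 : ℝ)) ^ ((2*β+1)/(2*α+2*β+1)) = Y
  rw [div_mul_eq_mul_div, div_mul_eq_mul_div]
  have hm2 : (2*β+α+1 : ℝ) ≠ 0 := by intro h; rw [show (2*β+α+1:ℝ) = α+2*β+1 by ring] at h; exact hm.ne' h
  field_simp
  ring


/-- Pinsker-type sharp asymptotics for the Sobolev ellipsoid under uniform allocation: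
if t(n) > 0 solves Σᵢ i^{2β+α}(1 − t(n) i^α)₊ = n t(n), then
R(n) = n⁻¹ Σᵢ i^{2β}(1 − t(n) i^α)₊ ∼ B̄_E n^{−2α/(2α+2β+1)} with
B̄_E = ((2α+2β+1)^{(2β+1)/(2α+2β+1)}/(2β+1)) (α/(α+2β+1))^{2α/(2α+2β+1)}. -/
theorem stmt18 (α β : ℝ) (hα : 0 < α) (hβ : -(1/2 : ℝ) < β)
    (t : ℝ → ℝ)
    (ht : ∀ n : ℝ, 0 < n → 0 < t n ∧
      ∑' i : ℕ, ((i : ℝ) + 1) ^ (2*β + α) * max (1 - t n * ((i : ℝ) + 1) ^ α) 0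
        = n * t n) :
    Tendsto (fun n : ℝ =>
        (n⁻¹ * ∑' i : ℕ, ((i : ℝ) + 1) ^ (2*β) * max (1 - t n * ((i : ℝ) + 1) ^ α) 0) /
          (((2*α+2*β+1) ^ ((2*β+1)/(2*α+2*β+1)) / (2*β+1)) *
            (α/(α+2*β+1)) ^ (2*α/(2*α+2*β+1)) * n ^ (-(2*α)/(2*α+2*β+1))))
      atTop (nhds 1) := by
  have h2β : (-1:ℝ) < 2*β := by linarith
  have h2βα : (-1:ℝ) < 2*β + α := by linarith
  have hs : (0:ℝ) < 2*β+1 := by linarith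
  have hm : (0:ℝ) < α+2*β+1 := by linarith
  have hD : (0:ℝ) < 2*α+2*β+1 := by linarith
  have htt := t_tendsto (β := β) hα t ht
  have hu : Tendsto (fun n : ℝ => (t n) ^ ((2*β+1)/α) *
      ∑' i : ℕ, ((i:ℝ)+1) ^ (2*β) * max (1 - t n * ((i:ℝ)+1) ^ α) 0) atTop
      (𝓝 (α/((2*β+1)*(2*β+α+1)))) :=
    (tendsto_scaled_sum hα (2*β) h2β).comp htt
  have hv : Tendsto (fun n : ℝ => (t n) ^ ((2*β+α+1)/α) *
      ∑' i : ℕ, ((i:ℝ)+1) ^ (2*β+α) * max (1 - t n * ((i:ℝ)+1) ^ α) 0) atTop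
      (𝓝 (α/((2*β+α+1)*(2*β+α+α+1)))) :=
    (tendsto_scaled_sum hα (2*β+α) h2βα).comp htt
  have hc1pos : (0:ℝ) < α/((2*β+α+1)*(2*β+α+α+1)) :=
    div_pos hα (mul_pos (by linarith) (by linarith))
  set B : ℝ := ((2*α+2*β+1) ^ ((2*β+1)/(2*α+2*β+1)) / (2*β+1)) *
      (α/(α+2*β+1)) ^ (2*α/(2*α+2*β+1)) with hBdef
  have hBpos : 0 < B := by
    rw [hBdef]
    have h1 : (0:ℝ) < (2*α+2*β+1) ^ ((2*β+1)/(2*α+2*β+1)) := rpow_pos_of_pos hD _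
    have h2 : (0:ℝ) < (α/(α+2*β+1)) ^ (2*α/(2*α+2*β+1)) :=
      rpow_pos_of_pos (div_pos hα hm) _
    positivity
  have hlim : Tendsto (fun n : ℝ =>
      ((t n) ^ ((2*β+1)/α) *
        ∑' i : ℕ, ((i:ℝ)+1) ^ (2*β) * max (1 - t n * ((i:ℝ)+1) ^ α) 0) *
      ((t n) ^ ((2*β+α+1)/α) *
        ∑' i : ℕ, ((i:ℝ)+1) ^ (2*β+α) * max (1 - t n * ((i:ℝ)+1) ^ α) 0)
          ^ (-(2*β+1)/(2*α+2*β+1)) / B) atTop (𝓝 1) := by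
    have h := (hu.mul (hv.rpow_const (p := -(2*β+1)/(2*α+2*β+1))
      (Or.inl hc1pos.ne'))).div_const B
    have hval : α/((2*β+1)*(2*β+α+1)) *
        (α/((2*β+α+1)*(2*β+α+α+1))) ^ (-(2*β+1)/(2*α+2*β+1)) / B = 1 := by
      rw [const_id hα hβ, ← hBdef, div_self hBpos.ne']
    rwa [hval] at h
  apply Filter.Tendsto.congr' _ hlim
  filter_upwards [eventually_gt_atTop 0] with n hn
  obtain ⟨hT, hEq⟩ := ht n hn
  have hvEq : (t n) ^ ((2*β+α+1)/α) *
      ∑' i : ℕ, ((i:ℝ)+1) ^ (2*β+α) * max (1 - t n * ((i:ℝ)+1) ^ α) 0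
      = n * (t n) ^ ((2*α+2*β+1)/α) := by
    rw [hEq, show (2*α+2*β+1)/α = (2*β+α+1)/α + 1 by field_simp; ring,
      rpow_add hT, rpow_one]
    ring
  have hvpow : ((t n) ^ ((2*β+α+1)/α) *
      ∑' i : ℕ, ((i:ℝ)+1) ^ (2*β+α) * max (1 - t n * ((i:ℝ)+1) ^ α) 0)
        ^ (-(2*β+1)/(2*α+2*β+1))
      = n ^ (-(2*β+1)/(2*α+2*β+1)) * (t n) ^ (-((2*β+1)/α)) := by
    rw [hvEq, mul_rpow hn.le (rpow_nonneg hT.le _), ← Real.rpow_mul hT.le]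
    congr 2
    rw [div_mul_div_comm, mul_comm (2*α+2*β+1), ← div_mul_div_comm, div_self hD.ne', mul_one, neg_div]
  rw [hvpow]
  have hcancel : (t n) ^ ((2*β+1)/α) * (t n) ^ (-((2*β+1)/α)) = 1 := by
    rw [← rpow_add hT, add_neg_cancel, rpow_zero]
  have hnpow : n ^ (-(2*β+1)/(2*α+2*β+1)) = n⁻¹ / n ^ (-(2*α)/(2*α+2*β+1)) := by
    rw [← rpow_neg_one n, ← rpow_sub hn]
    congr 1
    rw [eq_sub_iff_add_eq, ← add_div, div_eq_iff hD.ne']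
    ring
  have hnp : (0:ℝ) < n ^ (-(2*α)/(2*α+2*β+1)) := rpow_pos_of_pos hn _
  rw [hnpow]
  clear_value B
  clear hBdef hlim hu hv
  set S0 := ∑' i : ℕ, ((i:ℝ)+1) ^ (2*β) * max (1 - t n * ((i:ℝ)+1) ^ α) 0
  revert hcancel hnp
  generalize (t n) ^ ((2*β+1)/α) = A
  generalize (t n) ^ (-((2*β+1)/α)) = A'
  generalize n ^ (-(2*α)/(2*α+2*β+1)) = N
  intro hcancel hnp
  have hN1 : N * N⁻¹ = 1 := mul_inv_cancel₀ hnp.ne'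
  field_simp
  linear_combination S0 * hcancel
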